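/- Let G be a group, H a subgroup of finite index in G, and N ⊴ G a normal subgroup contained in H. Then FC_H(H/(H ∩ N)) = H ∩ FC_G(G/N); that is, for h ∈ H, the preimage in H of C_{H/(H∩N)}(h(H∩N)) has finite index in H if and only if the preimage in G of C_{G/N}(hN) has finite index in G. -/

import Mathlib

/-- For `H ≤ G` of finite index and `N ⊴ G` with `N ⊆ H`:
`FC_H(H/(H ∩ N)) = H ∩ FC_G(G/N)`, i.e. for `h ∈ H` the preimage in `H` of the centralizer
of `h` modulo `H ∩ N` has finite index in `H` iff the preimage in `G` of the centralizer of
`h` modulo `N` has finite index in `G`. -/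
theorem fc_mod_N_of_finite_index_subgroup
    (G : Type*) [Group G] (H N : Subgroup G) [N.Normal] [(N.subgroupOf H).Normal]
    (hHfi : H.FiniteIndex) (hNH : N ≤ H) :
    ∀ h : H,
      (Subgroup.comap (QuotientGroup.mk' (N.subgroupOf H))
          (Subgroup.centralizer {QuotientGroup.mk' (N.subgroupOf H) h})).FiniteIndex ↔
        (Subgroup.comap (QuotientGroup.mk' N)
          (Subgroup.centralizer {QuotientGroup.mk' N (h : G)})).FiniteIndex := by
  intro h
  set C := Subgroup.comap (QuotientGroup.mk' N)
      (Subgroup.centralizer {QuotientGroup.mk' N (h : G)}) with hC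
  set D := Subgroup.comap (QuotientGroup.mk' (N.subgroupOf H))
      (Subgroup.centralizer {QuotientGroup.mk' (N.subgroupOf H) h}) with hD
  have hDC : D = C.subgroupOf H := by
    ext x
    simp only [hD, hC, Subgroup.mem_subgroupOf, Subgroup.mem_comap,
      QuotientGroup.mk'_apply, Subgroup.mem_centralizer_singleton_iff,
      ← QuotientGroup.mk_mul, QuotientGroup.eq, Subgroup.mem_subgroupOf]
    push_cast
    rfl
  constructor
  · intro hDfi
    rw [hDC] at hDfi
    have h1 : (C ⊓ H).relIndex H ≠ 0 := by
      rw [Subgroup.inf_relIndex_right]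
      exact hDfi.index_ne_zero
    have h2 : (C ⊓ H).index ≠ 0 := by
      rw [← Subgroup.relIndex_mul_index (inf_le_right : C ⊓ H ≤ H)]
      exact mul_ne_zero h1 hHfi.index_ne_zero
    exact @Subgroup.finiteIndex_of_le _ _ _ _ ⟨h2⟩ inf_le_left
  · intro hCfi
    rw [hDC]
    exact @Subgroup.instFiniteIndex_subgroupOf _ _ C H hCfi
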